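/- Let A, B ⊆ ℝⁿ be nonempty closed convex sets, α ∈ (0, 1), P̄ = (1 − α)P_A + αP_B, and D = {(x, y) ∈ A × B : ‖x − y‖ = dist(A, B)}, where dist(A, B) = inf{‖a − b‖ : a ∈ A, b ∈ B}. Then the fixed point set {w ∈ ℝⁿ : P̄(w) = w} equals {(1 − α)x + αy : (x, y) ∈ D}. -/

import Mathlib

/-- `P` is the orthogonal projection onto `C`: for each `x`, `P x ∈ C` and `P x`
minimizes the distance from `x` to points of `C`. -/
def IsProjOn {n : ℕ} (C : Set (EuclideanSpace ℝ (Fin n)))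
    (P : EuclideanSpace ℝ (Fin n) → EuclideanSpace ℝ (Fin n)) : Prop :=
  ∀ x, P x ∈ C ∧ ∀ y ∈ C, ‖x - P x‖ ≤ ‖x - y‖

lemma proj_inner_le {n : ℕ} {C : Set (EuclideanSpace ℝ (Fin n))}
    {P : EuclideanSpace ℝ (Fin n) → EuclideanSpace ℝ (Fin n)}
    (hC : Convex ℝ C) (hP : IsProjOn C P) (u : EuclideanSpace ℝ (Fin n)) :
    ∀ z ∈ C, (inner ℝ (u - P u) (z - P u) : ℝ) ≤ 0 := by
  have heq : ‖u - P u‖ = ⨅ w : C, ‖u - w‖ := by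
    haveI : Nonempty C := ⟨⟨P u, (hP u).1⟩⟩
    apply le_antisymm
    · exact le_ciInf fun z => (hP u).2 z z.2
    · exact ciInf_le ⟨0, by rintro _ ⟨z, rfl⟩; exact norm_nonneg _⟩
        (⟨P u, (hP u).1⟩ : C)
  exact (norm_eq_iInf_iff_real_inner_le_zero hC (hP u).1).mp heq

lemma proj_eq_of_min {n : ℕ} {C : Set (EuclideanSpace ℝ (Fin n))}
    {P : EuclideanSpace ℝ (Fin n) → EuclideanSpace ℝ (Fin n)}
    (hC : Convex ℝ C) (hP : IsProjOn C P) {u x : EuclideanSpace ℝ (Fin n)}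
    (hx : x ∈ C) (hmin : ‖u - x‖ ≤ ‖u - P u‖) : P u = x := by
  have h1 : (inner ℝ (u - P u) (x - P u) : ℝ) ≤ 0 := proj_inner_le hC hP u x hx
  have h2 : ‖u - P u‖ ≤ ‖u - x‖ := (hP u).2 x hx
  have hexp : ‖u - x‖ ^ 2 =
      ‖u - P u‖ ^ 2 - 2 * (inner ℝ (u - P u) (x - P u) : ℝ) + ‖x - P u‖ ^ 2 := by
    have : u - x = (u - P u) - (x - P u) := by abel
    rw [this, @norm_sub_sq_real]
  have h3 : ‖x - P u‖ ^ 2 ≤ 0 := by nlinarith [norm_nonneg (u - x), norm_nonneg (u - P u)]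
  have h4 : x - P u = 0 := by
    have := norm_nonneg (x - P u)
    have : ‖x - P u‖ = 0 := by nlinarith
    exact norm_eq_zero.mp this
  have : x = P u := by
    have := sub_eq_zero.mp h4; exact this
  exact this.symm

/-- The fixed points of `P̄ = (1 − α)P_A + αP_B` are exactly the points
`(1 − α)x + αy` where `(x, y) ∈ A × B` realizes `dist(A, B)`. -/
theorem fixedPointSet_convexComb_proj {n : ℕ}
    (A B : Set (EuclideanSpace ℝ (Fin n)))
    (hAne : A.Nonempty) (hAcl : IsClosed A) (hAcv : Convex ℝ A)
    (hBne : B.Nonempty) (hBcl : IsClosed B) (hBcv : Convex ℝ B)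
    (PA PB : EuclideanSpace ℝ (Fin n) → EuclideanSpace ℝ (Fin n))
    (hPA : IsProjOn A PA) (hPB : IsProjOn B PB)
    (α : ℝ) (hα : α ∈ Set.Ioo (0 : ℝ) 1) :
    {w : EuclideanSpace ℝ (Fin n) | (1 - α) • PA w + α • PB w = w} =
      {w : EuclideanSpace ℝ (Fin n) | ∃ x ∈ A, ∃ y ∈ B,
        ‖x - y‖ = sInf {d : ℝ | ∃ a ∈ A, ∃ b ∈ B, d = ‖a - b‖} ∧
        w = (1 - α) • x + α • y} := by
  obtain ⟨hα0, hα1⟩ := hα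
  set S : Set ℝ := {d : ℝ | ∃ a ∈ A, ∃ b ∈ B, d = ‖a - b‖} with hS
  have hSne : S.Nonempty := ⟨‖hAne.choose - hBne.choose‖,
    hAne.choose, hAne.choose_spec, hBne.choose, hBne.choose_spec, rfl⟩
  have hSbd : BddBelow S := ⟨0, by rintro _ ⟨a, _, b, _, rfl⟩; exact norm_nonneg _⟩
  ext w
  simp only [Set.mem_setOf_eq]
  constructor
  · intro hw
    set x := PA w with hxdef
    set y := PB w with hydef
    have hx : x ∈ A := (hPA w).1
    have hy : y ∈ B := (hPB w).1
    refine ⟨x, hx, y, hy, ?_, hw.symm⟩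
    have hwx : w - x = α • (y - x) := by rw [← hw]; module
    have hwy : w - y = (1 - α) • (x - y) := by rw [← hw]; module
    apply le_antisymm
    · apply le_csInf hSne
      rintro d ⟨a, ha, b, hb, rfl⟩
      have hia : (inner ℝ (w - x) (a - x) : ℝ) ≤ 0 := proj_inner_le hAcv hPA w a ha
      have hib : (inner ℝ (w - y) (b - y) : ℝ) ≤ 0 := proj_inner_le hBcv hPB w b hb
      rw [hwx, real_inner_smul_left] at hia
      rw [hwy, real_inner_smul_left] at hib
      have hia' : (inner ℝ (y - x) (a - x) : ℝ) ≤ 0 := nonpos_of_mul_nonpos_right hia hα0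
      have hib' : (inner ℝ (x - y) (b - y) : ℝ) ≤ 0 := nonpos_of_mul_nonpos_right hib (by linarith)
      have hdecomp : (inner ℝ (x - y) (a - b) : ℝ) =
          (- (inner ℝ (y - x) (a - x) : ℝ)) + ‖x - y‖ ^ 2 + (- (inner ℝ (x - y) (b - y) : ℝ)) := by
        have h1 : a - b = (a - x) + (x - y) - (b - y) := by abel
        have hn : (inner ℝ (y - x) (a - x) : ℝ) = - (inner ℝ (x - y) (a - x) : ℝ) := by
          rw [← inner_neg_left]; congr 1; abel
        rw [h1, inner_sub_right, inner_add_right, real_inner_self_eq_norm_sq, hn]; ring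
      have hcs : (inner ℝ (x - y) (a - b) : ℝ) ≤ ‖x - y‖ * ‖a - b‖ := real_inner_le_norm _ _
      have hsq : ‖x - y‖ ^ 2 ≤ ‖x - y‖ * ‖a - b‖ := by
        nlinarith
      rcases eq_or_lt_of_le (norm_nonneg (x - y)) with h0 | h0
      · rw [← h0]; exact norm_nonneg _
      · nlinarith
    · exact csInf_le hSbd ⟨x, hx, y, hy, rfl⟩
  · rintro ⟨x, hx, y, hy, hd, rfl⟩
    set w := (1 - α) • x + α • y with hwdef
    have hδ0 : 0 ≤ sInf S := hd ▸ norm_nonneg _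
    have hwx : w - x = α • (y - x) := by rw [hwdef]; module
    have hwy : w - y = (1 - α) • (x - y) := by rw [hwdef]; module
    have hnwx : ‖w - x‖ = α * sInf S := by
      rw [hwx, norm_smul, Real.norm_eq_abs, abs_of_pos hα0, ← hd, norm_sub_rev]
    have hnwy : ‖w - y‖ = (1 - α) * sInf S := by
      rw [hwy, norm_smul, Real.norm_eq_abs, abs_of_pos (by linarith), ← hd]
    have hPAw : PA w = x := by
      apply proj_eq_of_min hAcv hPA hx
      have ha : PA w ∈ A := (hPA w).1
      have h1 : sInf S ≤ ‖PA w - y‖ := csInf_le hSbd ⟨PA w, ha, y, hy, rfl⟩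
      have h2 : ‖PA w - y‖ ≤ ‖PA w - w‖ + ‖w - y‖ := norm_sub_le_norm_sub_add_norm_sub _ w _
      have h3 : ‖PA w - w‖ = ‖w - PA w‖ := norm_sub_rev _ _
      rw [hnwx]; rw [hnwy] at h2; linarith
    have hPBw : PB w = y := by
      apply proj_eq_of_min hBcv hPB hy
      have hb : PB w ∈ B := (hPB w).1
      have h1 : sInf S ≤ ‖x - PB w‖ := csInf_le hSbd ⟨x, hx, PB w, hb, rfl⟩
      have h2 : ‖x - PB w‖ ≤ ‖x - w‖ + ‖w - PB w‖ := norm_sub_le_norm_sub_add_norm_sub _ w _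
      have h3 : ‖x - w‖ = ‖w - x‖ := norm_sub_rev _ _
      rw [hnwy]; rw [hnwx] at h3; linarith
    rw [hPAw, hPBw]
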